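/- For any set I ⊆ [N]×[N] with |I| = B and any t ≥ 1, Σ_{i ∈ R_I} min(|R_i|, t) ≥ min(t·√(B/2), B/4), where R_I is the set of distinct row indices of I and R_i = {j : (i,j) ∈ I}. -/

import Mathlib

lemma filter_fst_card_eq {N : ℕ} (I : Finset (Fin N × Fin N)) (A : Finset (Fin N)) :
    (I.filter (fun p => p.1 ∈ A)).card
      = ∑ i ∈ A, (I.filter (fun p => p.1 = i)).card := by
  rw [Finset.card_eq_sum_card_fiberwise (f := Prod.fst) (s := I.filter (fun p => p.1 ∈ A)) (t := A)
      (fun p hp => (Finset.mem_filter.mp hp).2)]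
  refine Finset.sum_congr rfl fun i hi => ?_
  congr 1
  ext p
  simp only [Finset.mem_filter]
  constructor
  · rintro ⟨⟨h1, _⟩, h2⟩; exact ⟨h1, h2⟩
  · rintro ⟨h1, h2⟩; exact ⟨⟨h1, by rw [h2]; exact hi⟩, h2⟩

lemma filter_snd_card_eq {N : ℕ} (I : Finset (Fin N × Fin N)) (A : Finset (Fin N)) :
    (I.filter (fun p => p.2 ∈ A)).card
      = ∑ j ∈ A, (I.filter (fun p => p.2 = j)).card := by
  rw [Finset.card_eq_sum_card_fiberwise (f := Prod.snd) (s := I.filter (fun p => p.2 ∈ A)) (t := A)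
      (fun p hp => (Finset.mem_filter.mp hp).2)]
  refine Finset.sum_congr rfl fun j hj => ?_
  congr 1
  ext p
  simp only [Finset.mem_filter]
  constructor
  · rintro ⟨⟨h1, _⟩, h2⟩; exact ⟨h1, h2⟩
  · rintro ⟨h1, h2⟩; exact ⟨⟨h1, by rw [h2]; exact hj⟩, h2⟩

/-- For `I ⊆ [N]×[N]` with `|I| = B` and `t ≥ 1`, the larger of
the row-version sum `Σ_{i ∈ R_I} min(|R_i|, t)` and the column-version sum
`Σ_{j ∈ C_I} min(|C_j|, t)` is at least `min(t·√(B/2), B/4)` (the row sum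
being assumed WLOG to be the larger one in the paper's statement). -/
theorem sum_min_row_counts_lower_bound
    (N t B : ℕ) (ht : 1 ≤ t) (I : Finset (Fin N × Fin N)) (hI : I.card = B) :
    min (t * Real.sqrt (B / 2)) (B / 4) ≤
      max
        (∑ i ∈ I.image Prod.fst,
          ((min ((I.filter (fun p => p.1 = i)).card) t : ℕ) : ℝ))
        (∑ j ∈ I.image Prod.snd,
          ((min ((I.filter (fun p => p.2 = j)).card) t : ℕ) : ℝ)) := by
  classical
  set f : Fin N → ℕ := fun i => (I.filter (fun p => p.1 = i)).card with hf
  set g : Fin N → ℕ := fun j => (I.filter (fun p => p.2 = j)).card with hg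
  set R : Finset (Fin N) := I.image Prod.fst with hR
  set C : Finset (Fin N) := I.image Prod.snd with hC
  set Hr := R.filter (fun i => t ≤ f i) with hHr
  set Lr := R.filter (fun i => f i < t) with hLr
  set Hc := C.filter (fun j => t ≤ g j) with hHc
  set Lc := C.filter (fun j => g j < t) with hLc
  set Sr : ℕ := ∑ i ∈ R, min (f i) t with hSr
  set Sc : ℕ := ∑ j ∈ C, min (g j) t with hSc
  have e1 : (∑ i ∈ R, ((min (f i) t : ℕ) : ℝ)) = (Sr : ℝ) := by
    rw [hSr]; push_cast; rfl
  have e2 : (∑ j ∈ C, ((min (g j) t : ℕ) : ℝ)) = (Sc : ℝ) := by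
    rw [hSc]; push_cast; rfl
  rw [e1, e2]
  -- heavy-row bound
  have htHr : Hr.card * t ≤ Sr := by
    calc Hr.card * t = ∑ _i ∈ Hr, t := by rw [Finset.sum_const, smul_eq_mul]
      _ = ∑ i ∈ Hr, min (f i) t := by
          refine Finset.sum_congr rfl fun i hi => ?_
          exact (min_eq_right (Finset.mem_filter.mp hi).2).symm
      _ ≤ Sr := Finset.sum_le_sum_of_subset (Finset.filter_subset _ _)
  have htHc : Hc.card * t ≤ Sc := by
    calc Hc.card * t = ∑ _j ∈ Hc, t := by rw [Finset.sum_const, smul_eq_mul]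
      _ = ∑ j ∈ Hc, min (g j) t := by
          refine Finset.sum_congr rfl fun j hj => ?_
          exact (min_eq_right (Finset.mem_filter.mp hj).2).symm
      _ ≤ Sc := Finset.sum_le_sum_of_subset (Finset.filter_subset _ _)
  -- light sums bounded by Sr, Sc
  have hLrS : ∑ i ∈ Lr, f i ≤ Sr := by
    calc ∑ i ∈ Lr, f i = ∑ i ∈ Lr, min (f i) t := by
          refine Finset.sum_congr rfl fun i hi => ?_
          exact (min_eq_left (le_of_lt (Finset.mem_filter.mp hi).2)).symm
      _ ≤ Sr := Finset.sum_le_sum_of_subset (Finset.filter_subset _ _)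
  have hLcS : ∑ j ∈ Lc, g j ≤ Sc := by
    calc ∑ j ∈ Lc, g j = ∑ j ∈ Lc, min (g j) t := by
          refine Finset.sum_congr rfl fun j hj => ?_
          exact (min_eq_left (le_of_lt (Finset.mem_filter.mp hj).2)).symm
      _ ≤ Sc := Finset.sum_le_sum_of_subset (Finset.filter_subset _ _)
  -- covering
  have hcover : I ⊆ ((I.filter (fun p => p.1 ∈ Lr)) ∪ (I.filter (fun p => p.2 ∈ Lc)))
      ∪ (I.filter (fun p => p.1 ∈ Hr ∧ p.2 ∈ Hc)) := by
    intro p hp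
    have hpR : p.1 ∈ R := Finset.mem_image_of_mem _ hp
    have hpC : p.2 ∈ C := Finset.mem_image_of_mem _ hp
    rcases lt_or_ge (f p.1) t with h1 | h1
    · exact Finset.mem_union_left _ (Finset.mem_union_left _
        (Finset.mem_filter.mpr ⟨hp, Finset.mem_filter.mpr ⟨hpR, h1⟩⟩))
    rcases lt_or_ge (g p.2) t with h2 | h2
    · exact Finset.mem_union_left _ (Finset.mem_union_right _
        (Finset.mem_filter.mpr ⟨hp, Finset.mem_filter.mpr ⟨hpC, h2⟩⟩))
    · exact Finset.mem_union_right _ (Finset.mem_filter.mpr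
        ⟨hp, Finset.mem_filter.mpr ⟨hpR, h1⟩, Finset.mem_filter.mpr ⟨hpC, h2⟩⟩)
  have hF1 : (I.filter (fun p => p.1 ∈ Lr)).card = ∑ i ∈ Lr, f i :=
    filter_fst_card_eq I Lr
  have hF2 : (I.filter (fun p => p.2 ∈ Lc)).card = ∑ j ∈ Lc, g j :=
    filter_snd_card_eq I Lc
  have hF3 : (I.filter (fun p => p.1 ∈ Hr ∧ p.2 ∈ Hc)).card ≤ Hr.card * Hc.card := by
    have hsub : (I.filter (fun p => p.1 ∈ Hr ∧ p.2 ∈ Hc)) ⊆ Hr ×ˢ Hc := by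
      intro p hp
      obtain ⟨_, h1, h2⟩ := Finset.mem_filter.mp hp
      exact Finset.mem_product.mpr ⟨h1, h2⟩
    calc (I.filter (fun p => p.1 ∈ Hr ∧ p.2 ∈ Hc)).card ≤ (Hr ×ˢ Hc).card :=
          Finset.card_le_card hsub
      _ = Hr.card * Hc.card := Finset.card_product _ _
  have hBcount : B ≤ (∑ i ∈ Lr, f i) + (∑ j ∈ Lc, g j) + Hr.card * Hc.card := by
    calc B = I.card := hI.symm
      _ ≤ (((I.filter (fun p => p.1 ∈ Lr)) ∪ (I.filter (fun p => p.2 ∈ Lc)))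
          ∪ (I.filter (fun p => p.1 ∈ Hr ∧ p.2 ∈ Hc))).card := Finset.card_le_card hcover
      _ ≤ ((I.filter (fun p => p.1 ∈ Lr)) ∪ (I.filter (fun p => p.2 ∈ Lc))).card
          + (I.filter (fun p => p.1 ∈ Hr ∧ p.2 ∈ Hc)).card := Finset.card_union_le _ _
      _ ≤ ((I.filter (fun p => p.1 ∈ Lr)).card + (I.filter (fun p => p.2 ∈ Lc)).card)
          + (I.filter (fun p => p.1 ∈ Hr ∧ p.2 ∈ Hc)).card := by
            gcongr; exact Finset.card_union_le _ _
      _ ≤ (∑ i ∈ Lr, f i) + (∑ j ∈ Lc, g j) + Hr.card * Hc.card := by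
            rw [hF1, hF2]; gcongr
  -- now real case analysis
  have hsq : Real.sqrt ((B : ℝ) / 2) * Real.sqrt ((B : ℝ) / 2) = (B : ℝ) / 2 :=
    Real.mul_self_sqrt (by positivity)
  by_cases h1 : Real.sqrt ((B : ℝ) / 2) ≤ (Hr.card : ℝ)
  · calc min ((t : ℝ) * Real.sqrt ((B : ℝ) / 2)) ((B : ℝ) / 4)
        ≤ (t : ℝ) * Real.sqrt ((B : ℝ) / 2) := min_le_left _ _
      _ ≤ (t : ℝ) * (Hr.card : ℝ) := by
          have : (0 : ℝ) ≤ (t : ℝ) := by positivity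
          nlinarith
      _ ≤ (Sr : ℝ) := by
          have hc : (Hr.card : ℝ) * (t : ℝ) ≤ (Sr : ℝ) := by exact_mod_cast htHr
          linarith [hc, mul_comm (t : ℝ) (Hr.card : ℝ)]
      _ ≤ max (Sr : ℝ) (Sc : ℝ) := le_max_left _ _
  by_cases h2 : Real.sqrt ((B : ℝ) / 2) ≤ (Hc.card : ℝ)
  · calc min ((t : ℝ) * Real.sqrt ((B : ℝ) / 2)) ((B : ℝ) / 4)
        ≤ (t : ℝ) * Real.sqrt ((B : ℝ) / 2) := min_le_left _ _
      _ ≤ (t : ℝ) * (Hc.card : ℝ) := by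
          have : (0 : ℝ) ≤ (t : ℝ) := by positivity
          nlinarith
      _ ≤ (Sc : ℝ) := by
          have hc : (Hc.card : ℝ) * (t : ℝ) ≤ (Sc : ℝ) := by exact_mod_cast htHc
          linarith [hc, mul_comm (t : ℝ) (Hc.card : ℝ)]
      _ ≤ max (Sr : ℝ) (Sc : ℝ) := le_max_right _ _
  push_neg at h1 h2
  have hprod : (Hr.card : ℝ) * (Hc.card : ℝ) < (B : ℝ) / 2 := by
    nlinarith [Real.sqrt_nonneg ((B : ℝ) / 2), Nat.cast_nonneg (α := ℝ) Hr.card,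
      Nat.cast_nonneg (α := ℝ) Hc.card]
  have hBR : (B : ℝ) ≤ (Sr : ℝ) + (Sc : ℝ) + (Hr.card : ℝ) * (Hc.card : ℝ) := by
    have h := hBcount
    have h' : B ≤ Sr + Sc + Hr.card * Hc.card := by
      calc B ≤ (∑ i ∈ Lr, f i) + (∑ j ∈ Lc, g j) + Hr.card * Hc.card := hBcount
        _ ≤ Sr + Sc + Hr.card * Hc.card := by gcongr
    exact_mod_cast h'
  have hmax : ((Sr : ℝ) + (Sc : ℝ)) / 2 ≤ max (Sr : ℝ) (Sc : ℝ) := by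
    have := le_max_left (Sr : ℝ) (Sc : ℝ)
    have := le_max_right (Sr : ℝ) (Sc : ℝ)
    linarith
  calc min ((t : ℝ) * Real.sqrt ((B : ℝ) / 2)) ((B : ℝ) / 4)
      ≤ (B : ℝ) / 4 := min_le_right _ _
    _ ≤ ((Sr : ℝ) + (Sc : ℝ)) / 2 := by linarith
    _ ≤ max (Sr : ℝ) (Sc : ℝ) := hmax
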